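/- Let θ > 0 and c ≥ 0. There exist constants C > 0 and h₀ ∈ (0,1], depending only on θ and c, such that for every h ∈ (0, h₀] the following holds: let ξ₁, ξ₂ ∈ ℝ² span a triangle with vertices 0, ξ₁, ξ₂ all of whose side lengths lie in [θh, h] and with |det(ξ₁, ξ₂)| ≥ θh², and let ψ₁, ψ₂ ∈ ℝ³ satisfy |ψᵢ(j) − ξᵢ(j)| ≤ c h³ for j = 1, 2 and additionally |ψᵢ(3)| ≤ c h³ for i = 1, 2. Let Γ be the unique real 3×2 matrix with Γ ξᵢ = ψᵢ for i = 1, 2. Then ‖Γ − Id‖_∞ ≤ C h², where Id denotes the 3×2 matrix whose upper 2×2 block is the identity and whose last row is zero, and ‖·‖_∞ is the maximum absolute value of the matrix entries. -/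

import Mathlib

open Matrix

/-- The 3×2 matrix whose upper 2×2 block is the identity and whose last row is zero. -/
def Id32 : Matrix (Fin 3) (Fin 2) ℝ :=
  Matrix.of fun i j => if (i : ℕ) = (j : ℕ) then 1 else 0

lemma coord_abs_le_norm {n : ℕ} (ξ : EuclideanSpace ℝ (Fin n)) (j : Fin n) : |ξ j| ≤ ‖ξ‖ := by
  rw [EuclideanSpace.norm_eq]
  rw [show |ξ j| = Real.sqrt (‖ξ j‖ ^ 2) by rw [Real.sqrt_sq_eq_abs]; simp]
  apply Real.sqrt_le_sqrt
  exact Finset.single_le_sum (f := fun i => ‖ξ i‖ ^ 2) (fun i _ => sq_nonneg _) (Finset.mem_univ j)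

lemma key_bound (θ c h D x u v p q : ℝ) (hθ : 0 < θ) (hc : 0 ≤ c) (hh : 0 < h)
    (hD : θ * h ^ 2 ≤ |D|)
    (hxD : x * D = p * u - q * v)
    (hp : |p| ≤ c * h ^ 3) (hq : |q| ≤ c * h ^ 3)
    (hu : |u| ≤ h) (hv : |v| ≤ h) :
    |x| ≤ (2 * c / θ + 1) * h ^ 2 := by
  have hD0 : (0:ℝ) < |D| := lt_of_lt_of_le (by positivity) hD
  have hDne : D ≠ 0 := fun h0 => by simp [h0] at hD0
  have hnum : |x * D| ≤ 2 * c * h ^ 4 := by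
    rw [hxD]
    calc |p * u - q * v| ≤ |p * u| + |q * v| := abs_sub _ _
      _ = |p| * |u| + |q| * |v| := by rw [abs_mul, abs_mul]
      _ ≤ (c * h ^ 3) * h + (c * h ^ 3) * h := by
          gcongr <;> positivity
      _ = 2 * c * h ^ 4 := by ring
  have hx : |x| = |x * D| / |D| := by
    rw [abs_mul]; field_simp
  rw [hx]
  have h1 : |x * D| / |D| ≤ (2 * c * h ^ 4) / (θ * h ^ 2) :=
    div_le_div₀ (by positivity) hnum (by positivity) hD
  refine h1.trans ?_
  have : (2 * c * h ^ 4) / (θ * h ^ 2) = (2 * c / θ) * h ^ 2 := by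
    field_simp
  rw [this]
  nlinarith [sq_nonneg h]

/-- Proposition 3.6(iii): improved Jacobian supercloseness `‖Γ − Id‖_∞ = O(h²)`
under the additional `O(h³)` normal deviation condition. -/
theorem jacobian_supercloseness
    (θ c : ℝ) (hθ : 0 < θ) (hc : 0 ≤ c) :
    ∃ C > (0 : ℝ), ∃ h₀ > (0 : ℝ), h₀ ≤ 1 ∧
      ∀ h : ℝ, 0 < h → h ≤ h₀ →
        ∀ (ξ₁ ξ₂ : EuclideanSpace ℝ (Fin 2)) (ψ₁ ψ₂ : EuclideanSpace ℝ (Fin 3))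
          (Γ : Matrix (Fin 3) (Fin 2) ℝ),
          θ * h ≤ ‖ξ₁‖ → ‖ξ₁‖ ≤ h →
          θ * h ≤ ‖ξ₂‖ → ‖ξ₂‖ ≤ h →
          θ * h ≤ ‖ξ₂ - ξ₁‖ → ‖ξ₂ - ξ₁‖ ≤ h →
          θ * h ^ 2 ≤ |ξ₁ 0 * ξ₂ 1 - ξ₁ 1 * ξ₂ 0| →
          |ψ₁ 0 - ξ₁ 0| ≤ c * h ^ 3 → |ψ₁ 1 - ξ₁ 1| ≤ c * h ^ 3 →
          |ψ₂ 0 - ξ₂ 0| ≤ c * h ^ 3 → |ψ₂ 1 - ξ₂ 1| ≤ c * h ^ 3 →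
          |ψ₁ 2| ≤ c * h ^ 3 → |ψ₂ 2| ≤ c * h ^ 3 →
          Γ.mulVec ξ₁ = ψ₁ → Γ.mulVec ξ₂ = ψ₂ →
          ∀ (i : Fin 3) (j : Fin 2), |(Γ - Id32) i j| ≤ C * h ^ 2 := by
  refine ⟨2 * c / θ + 1, by positivity, 1, one_pos, le_refl 1, ?_⟩
  intro h hh _ ξ₁ ξ₂ ψ₁ ψ₂ Γ _ hξ₁ _ hξ₂ _ _ hdet hd10 hd11 hd20 hd21 hn1 hn2 hΓ1 hΓ2 i j
  have e1 : ∀ i : Fin 3, Γ i 0 * ξ₁ 0 + Γ i 1 * ξ₁ 1 = ψ₁ i := by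
    intro i
    have := congrFun hΓ1 i
    simpa [Matrix.mulVec, dotProduct, Fin.sum_univ_two] using this
  have e2 : ∀ i : Fin 3, Γ i 0 * ξ₂ 0 + Γ i 1 * ξ₂ 1 = ψ₂ i := by
    intro i
    have := congrFun hΓ2 i
    simpa [Matrix.mulVec, dotProduct, Fin.sum_univ_two] using this
  have hu0 : |ξ₁ 0| ≤ h := (coord_abs_le_norm ξ₁ 0).trans hξ₁
  have hu1 : |ξ₁ 1| ≤ h := (coord_abs_le_norm ξ₁ 1).trans hξ₁
  have hv0 : |ξ₂ 0| ≤ h := (coord_abs_le_norm ξ₂ 0).trans hξ₂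
  have hv1 : |ξ₂ 1| ≤ h := (coord_abs_le_norm ξ₂ 1).trans hξ₂
  fin_cases i <;> fin_cases j <;>
    simp only [Matrix.sub_apply, Id32, Matrix.of_apply, Fin.isValue, Fin.mk_zero, Fin.mk_one]
  · -- i=0, j=0
    refine key_bound θ c h _ _ (ξ₂ 1) (ξ₁ 1) (ψ₁ 0 - ξ₁ 0) (ψ₂ 0 - ξ₂ 0) hθ hc hh hdet ?_ hd10 hd20 hv1 hu1
    norm_num
    linear_combination ξ₂ 1 * e1 0 - ξ₁ 1 * e2 0
  · -- i=0, j=1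
    refine key_bound θ c h _ _ (ξ₁ 0) (ξ₂ 0) (ψ₂ 0 - ξ₂ 0) (ψ₁ 0 - ξ₁ 0) hθ hc hh hdet ?_ hd20 hd10 hu0 hv0
    norm_num
    linear_combination ξ₁ 0 * e2 0 - ξ₂ 0 * e1 0
  · -- i=1, j=0
    refine key_bound θ c h _ _ (ξ₂ 1) (ξ₁ 1) (ψ₁ 1 - ξ₁ 1) (ψ₂ 1 - ξ₂ 1) hθ hc hh hdet ?_ hd11 hd21 hv1 hu1
    norm_num
    linear_combination ξ₂ 1 * e1 1 - ξ₁ 1 * e2 1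
  · -- i=1, j=1
    refine key_bound θ c h _ _ (ξ₁ 0) (ξ₂ 0) (ψ₂ 1 - ξ₂ 1) (ψ₁ 1 - ξ₁ 1) hθ hc hh hdet ?_ hd21 hd11 hu0 hv0
    norm_num
    linear_combination ξ₁ 0 * e2 1 - ξ₂ 0 * e1 1
  · -- i=2, j=0
    refine key_bound θ c h _ _ (ξ₂ 1) (ξ₁ 1) (ψ₁ ⟨2, by omega⟩) (ψ₂ ⟨2, by omega⟩) hθ hc hh hdet ?_ hn1 hn2 hv1 hu1
    norm_num
    linear_combination ξ₂ 1 * e1 ⟨2, by omega⟩ - ξ₁ 1 * e2 ⟨2, by omega⟩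
  · -- i=2, j=1
    refine key_bound θ c h _ _ (ξ₁ 0) (ξ₂ 0) (ψ₂ ⟨2, by omega⟩) (ψ₁ ⟨2, by omega⟩) hθ hc hh hdet ?_ hn2 hn1 hu0 hv0
    norm_num
    linear_combination ξ₁ 0 * e2 ⟨2, by omega⟩ - ξ₂ 0 * e1 ⟨2, by omega⟩
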